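/- Let f_0, …, f_d be tropical polynomials in n variables with rational coefficients, f_i = ⊕_J c_{i,J} ⊗ x^{⊗J}, let y = ⊕_{I ∈ S} a_I ⊗ x^{⊗I} be a tropical Newton–Puiseux polynomial, and let m be a positive integer. Then y is a resolution of f = ⊕_{i=0}^d f_i ⊗ y^{⊗i} if and only if the tropical Newton–Puiseux polynomial y_m = ⊕_{I ∈ S} (m·a_I) ⊗ x^{⊗I} is a resolution of f^{(m)} = ⊕_{i=0}^d f_i^{(m)} ⊗ y^{⊗i}, where f_i^{(m)} = ⊕_J (m·c_{i,J}) ⊗ x^{⊗J}. In particular, by taking m a common denominator of all the coefficients of f_0, …, f_d, the question of resolubility reduces to the case of integer coefficients. -/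

import Mathlib

open Finset

/-- A tropical polynomial in `n` variables: a finite nonempty family of monomials
`(c, J)` with real coefficient `c` and exponent `J ∈ ℕ^n`.  It defines the convex
piecewise-linear function `x ↦ min_J (c_J + ⟨J, x⟩)`. -/
structure TropPoly (n : ℕ) where
  monos : Finset (ℝ × (Fin n → ℕ))
  ne : monos.Nonempty

/-- The convex piecewise-linear function defined by a tropical polynomial. -/
noncomputable def TropPoly.eval {n : ℕ} (f : TropPoly n) (x : Fin n → ℝ) : ℝ :=
  f.monos.inf' f.ne fun p => p.1 + ∑ j, (p.2 j : ℝ) * x j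

/-- A tropical Newton–Puiseux polynomial in `n` variables: a finite nonempty family of
monomials `(a, I)` with rational coefficient `a` and exponent `I ∈ ℚ^n`. -/
structure NPPoly (n : ℕ) where
  monos : Finset (ℚ × (Fin n → ℚ))
  ne : monos.Nonempty

/-- The convex piecewise-linear function defined by a tropical Newton–Puiseux polynomial. -/
noncomputable def NPPoly.eval {n : ℕ} (y : NPPoly n) (x : Fin n → ℝ) : ℝ :=
  y.monos.inf' y.ne fun p => (p.1 : ℝ) + ∑ j, (p.2 j : ℝ) * x j

/-- The value of the term `f_i ⊗ y^{⊗ i}` of `f = ⊕_{i=0}^d f_i ⊗ y^{⊗ i}` at the point `x`,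
when the indeterminate `y` has the value `y0`. -/
noncomputable def termVal {n d : ℕ} (f : Fin (d+1) → TropPoly n) (x : Fin n → ℝ) (y0 : ℝ)
    (i : Fin (d+1)) : ℝ :=
  (f i).eval x + (i : ℕ) * y0

/-- At the point `x`, with value `y0` substituted for the indeterminate, the minimum of the
`d+1` values `f_i(x) + i·y0` is attained for at least two distinct indices `i`. -/
def TiesAt {n d : ℕ} (f : Fin (d+1) → TropPoly n) (x : Fin n → ℝ) (y0 : ℝ) : Prop :=
  ∃ i₁ i₂ : Fin (d+1), i₁ ≠ i₂ ∧ termVal f x y0 i₁ = termVal f x y0 i₂ ∧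
    ∀ i, termVal f x y0 i₁ ≤ termVal f x y0 i

/-- A function `y : ℝ^n → ℝ` is a resolution of `f = ⊕_{i=0}^d f_i ⊗ y^{⊗ i}` if at every
point `x` the minimum of the `d+1` values `f_i(x) + i·y(x)` is attained for at least two
distinct indices. -/
def IsResolution {n d : ℕ} (f : Fin (d+1) → TropPoly n) (y : (Fin n → ℝ) → ℝ) : Prop :=
  ∀ x, TiesAt f x (y x)

/-- The tropical polynomial obtained by multiplying all the coefficients by `m`. -/
noncomputable def TropPoly.scale {n : ℕ} (f : TropPoly n) (m : ℕ) : TropPoly n :=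
  ⟨f.monos.image fun p => ((m : ℝ) * p.1, p.2), f.ne.image _⟩

/-- The Newton-Puiseux polynomial obtained by multiplying all the coefficients by `m`. -/
def NPPoly.scale {n : ℕ} (y : NPPoly n) (m : ℕ) : NPPoly n :=
  ⟨y.monos.image fun p => ((m : ℚ) * p.1, p.2), y.ne.image _⟩

/-- A tropical polynomial has rational coefficients. -/
def HasRatCoeffs {n : ℕ} (f : TropPoly n) : Prop :=
  ∀ p ∈ f.monos, ∃ q : ℚ, p.1 = (q : ℝ)

lemma mul_inf'_aux {α : Type*} (s : Finset α) (hs : s.Nonempty) (g : α → ℝ) {m : ℝ}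
    (hm : 0 ≤ m) : m * s.inf' hs g = s.inf' hs fun p => m * g p := by
  have := Finset.apply_inf'_eq_inf'_comp (γ := ℝ) hs (f := g) (fun r => m * r)
    (fun a b => by exact mul_min_of_nonneg a b hm)
  simpa [Function.comp] using this

lemma TropPoly.scale_eval {n : ℕ} (f : TropPoly n) {m : ℕ} (hm : 0 < m) (x : Fin n → ℝ) :
    (f.scale m).eval x = m * f.eval (fun j => x j / m) := by
  have hm' : (0:ℝ) < m := by exact_mod_cast hm
  conv_rhs => rw [TropPoly.eval]
  rw [mul_inf'_aux _ _ _ hm'.le]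
  unfold TropPoly.scale TropPoly.eval
  rw [Finset.inf'_image]
  refine Finset.inf'_congr _ rfl fun p _ => ?_
  simp only [Function.comp]
  rw [mul_add, Finset.mul_sum]
  congr 1
  refine Finset.sum_congr rfl fun j _ => ?_
  field_simp

lemma NPPoly.scale_eval {n : ℕ} (y : NPPoly n) {m : ℕ} (hm : 0 < m) (x : Fin n → ℝ) :
    (y.scale m).eval x = m * y.eval (fun j => x j / m) := by
  have hm' : (0:ℝ) < m := by exact_mod_cast hm
  conv_rhs => rw [NPPoly.eval]
  rw [mul_inf'_aux _ _ _ hm'.le]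
  unfold NPPoly.scale NPPoly.eval
  rw [Finset.inf'_image]
  refine Finset.inf'_congr _ rfl fun p _ => ?_
  simp only [Function.comp]
  push_cast
  rw [mul_add, Finset.mul_sum]
  congr 1
  refine Finset.sum_congr rfl fun j _ => ?_
  field_simp

lemma termVal_scale {n d : ℕ} (f : Fin (d+1) → TropPoly n) {m : ℕ} (hm : 0 < m)
    (x : Fin n → ℝ) (y0 : ℝ) (i : Fin (d+1)) :
    termVal (fun i => (f i).scale m) x ((m : ℝ) * y0) i
      = m * termVal f (fun j => x j / m) y0 i := by
  simp only [termVal, TropPoly.scale_eval _ hm]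
  ring

lemma tiesAt_scale {n d : ℕ} (f : Fin (d+1) → TropPoly n) {m : ℕ} (hm : 0 < m)
    (x : Fin n → ℝ) (y0 : ℝ) :
    TiesAt (fun i => (f i).scale m) x ((m : ℝ) * y0)
      ↔ TiesAt f (fun j => x j / m) y0 := by
  have hm' : (0:ℝ) < m := by exact_mod_cast hm
  unfold TiesAt
  simp only [termVal_scale f hm]
  constructor
  · rintro ⟨i₁, i₂, h12, heq, hle⟩
    exact ⟨i₁, i₂, h12, mul_left_cancel₀ hm'.ne' heq,
      fun i => le_of_mul_le_mul_left (hle i) hm'⟩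
  · rintro ⟨i₁, i₂, h12, heq, hle⟩
    exact ⟨i₁, i₂, h12, by rw [heq],
      fun i => mul_le_mul_of_nonneg_left (hle i) hm'.le⟩

/-- Let `f_0, ..., f_d` be tropical polynomials with rational coefficients, `y` a tropical
Newton-Puiseux polynomial, and `m` a positive integer.  Then `y` is a resolution of
`f = ⊕ f_i ⊗ y^{⊗i}` iff `y_m` (with all coefficients multiplied by `m`) is a resolution of
`f^{(m)} = ⊕ f_i^{(m)} ⊗ y^{⊗i}` (with all coefficients multiplied by `m`): resolubility
reduces to the case of integer coefficients. -/
theorem resolution_iff_scaled {n d : ℕ} (f : Fin (d+1) → TropPoly n)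
    (hq : ∀ i, HasRatCoeffs (f i)) (y : NPPoly n) (m : ℕ) (hm : 0 < m) :
    IsResolution f y.eval ↔
      IsResolution (fun i => (f i).scale m) (y.scale m).eval := by
  have hm' : (0:ℝ) < m := by exact_mod_cast hm
  constructor
  · intro h x
    rw [NPPoly.scale_eval y hm, tiesAt_scale f hm]
    exact h _
  · intro h x
    have := h (fun j => (m : ℝ) * x j)
    rw [NPPoly.scale_eval y hm, tiesAt_scale f hm] at this
    have hx : (fun j => (m : ℝ) * x j / m) = x := by
      funext j; field_simp
    rwa [hx] at this
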